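/- Let Σ̂ be a p×p real symmetric matrix with spectral decomposition Σ̂ = Σ_{i=1}^p λ̂_i v_i v_i^T, and define its positive part Σ̂^+ = Σ_{i=1}^p max(λ̂_i, 0) v_i v_i^T. Then for any p×p symmetric positive semidefinite matrix Σ, |||Σ̂^+ − Σ||| ≤ 2 |||Σ̂ − Σ|||, where |||·||| is the spectral norm. -/

import Mathlib

open scoped ENNReal BigOperators

noncomputable section

/-- The vector `ℓ_w` norm on `ℝ^p`, for `1 ≤ w ≤ ∞`. -/
def vecLwNorm {p : ℕ} (w : ℝ≥0∞) (x : Fin p → ℝ) : ℝ :=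
  if w = ∞ then ⨆ i, |x i| else (∑ i, |x i| ^ w.toReal) ^ (1 / w.toReal)

/-- The matrix `ℓ_w` operator norm `|||A|||_w = sup_{‖x‖_w = 1} ‖Ax‖_w`. -/
def lwOpNorm {p : ℕ} (w : ℝ≥0∞) (A : Matrix (Fin p) (Fin p) ℝ) : ℝ :=
  sSup {r : ℝ | ∃ x : Fin p → ℝ, vecLwNorm w x = 1 ∧ r = vecLwNorm w (A.mulVec x)}

/-- The spectral norm (matrix `ℓ_2` operator norm). -/
def specNorm {p : ℕ} (A : Matrix (Fin p) (Fin p) ℝ) : ℝ := lwOpNorm 2 A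

lemma vecLw2_eq {p : ℕ} (x : Fin p → ℝ) :
    vecLwNorm 2 x = Real.sqrt (∑ i, x i ^ 2) := by
  unfold vecLwNorm
  rw [if_neg (by norm_num)]
  have h2 : (2 : ℝ≥0∞).toReal = 2 := by norm_num
  rw [h2, Real.sqrt_eq_rpow]
  congr 1
  refine Finset.sum_congr rfl fun i _ => ?_
  rw [show ((2:ℝ) = ((2:ℕ):ℝ)) by norm_num, Real.rpow_natCast]
  simp [sq_abs]

lemma vecLw2_eq_dot {p : ℕ} (x : Fin p → ℝ) :
    vecLwNorm 2 x = Real.sqrt (dotProduct x x) := by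
  rw [vecLw2_eq]; congr 1; simp [dotProduct, sq]

lemma vecLw2_nonneg {p : ℕ} (x : Fin p → ℝ) : 0 ≤ vecLwNorm 2 x := by
  rw [vecLw2_eq]; exact Real.sqrt_nonneg _

lemma specNorm_nonneg {p : ℕ} (A : Matrix (Fin p) (Fin p) ℝ) : 0 ≤ specNorm A := by
  apply Real.sSup_nonneg
  rintro r ⟨x, -, rfl⟩
  exact vecLw2_nonneg _

lemma specNorm_le {p : ℕ} {A : Matrix (Fin p) (Fin p) ℝ} {c : ℝ} (hc : 0 ≤ c)
    (h : ∀ x : Fin p → ℝ, vecLwNorm 2 x = 1 → vecLwNorm 2 (A.mulVec x) ≤ c) :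
    specNorm A ≤ c := by
  apply Real.sSup_le _ hc
  rintro r ⟨x, hx, rfl⟩
  exact h x hx

-- crude entrywise bound for BddAbove
lemma vecLw2_mulVec_le {p : ℕ} (A : Matrix (Fin p) (Fin p) ℝ) (x : Fin p → ℝ)
    (hx : vecLwNorm 2 x = 1) :
    vecLwNorm 2 (A.mulVec x) ≤ Real.sqrt (∑ i, ∑ j, A i j ^ 2) := by
  have hxx : (∑ j, x j ^ 2) = 1 := by
    have := vecLw2_eq x
    rw [hx] at this
    have h1 : Real.sqrt (∑ i, x i ^ 2) = 1 := this.symm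
    have h2 := Real.sq_sqrt (Finset.sum_nonneg (s := Finset.univ) fun i _ => sq_nonneg (x i))
    rw [h1] at h2; simpa using h2.symm
  rw [vecLw2_eq]
  apply Real.sqrt_le_sqrt
  have : ∀ i, A.mulVec x i ^ 2 ≤ (∑ j, A i j ^ 2) := by
    intro i
    have := Finset.sum_mul_sq_le_sq_mul_sq Finset.univ (fun j => A i j) x
    simpa [Matrix.mulVec, dotProduct, hxx] using this
  exact Finset.sum_le_sum fun i _ => this i

lemma le_specNorm {p : ℕ} (A : Matrix (Fin p) (Fin p) ℝ) (x : Fin p → ℝ)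
    (hx : vecLwNorm 2 x = 1) : vecLwNorm 2 (A.mulVec x) ≤ specNorm A := by
  apply le_csSup
  · refine ⟨Real.sqrt (∑ i, ∑ j, A i j ^ 2), ?_⟩
    rintro r ⟨y, hy, rfl⟩
    exact vecLw2_mulVec_le A y hy
  · exact ⟨x, hx, rfl⟩

lemma vecLw2_eq_norm {p : ℕ} (x : Fin p → ℝ) :
    vecLwNorm 2 x = ‖((WithLp.equiv 2 (Fin p → ℝ)).symm x : EuclideanSpace ℝ (Fin p))‖ := by
  rw [vecLw2_eq, EuclideanSpace.norm_eq]
  congr 1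
  refine Finset.sum_congr rfl fun i _ => ?_
  simp [WithLp.equiv_symm_apply, sq_abs]

lemma vecLw2_add_le {p : ℕ} (x y : Fin p → ℝ) :
    vecLwNorm 2 (x + y) ≤ vecLwNorm 2 x + vecLwNorm 2 y := by
  simp only [vecLw2_eq_norm]
  exact norm_add_le _ _

lemma vecLw2_smul {p : ℕ} (c : ℝ) (x : Fin p → ℝ) :
    vecLwNorm 2 (c • x) = |c| * vecLwNorm 2 x := by
  simp only [vecLw2_eq_norm]
  have : ((WithLp.equiv 2 (Fin p → ℝ)).symm (c • x) : EuclideanSpace ℝ (Fin p))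
      = c • (WithLp.equiv 2 (Fin p → ℝ)).symm x := rfl
  rw [this, norm_smul, Real.norm_eq_abs]

lemma specNorm_triangle {p : ℕ} (X Y : Matrix (Fin p) (Fin p) ℝ) :
    specNorm (X + Y) ≤ specNorm X + specNorm Y := by
  apply specNorm_le (add_nonneg (specNorm_nonneg X) (specNorm_nonneg Y))
  intro x hx
  rw [Matrix.add_mulVec]
  exact (vecLw2_add_le _ _).trans (add_le_add (le_specNorm X x hx) (le_specNorm Y x hx))

lemma abs_dot_le {p : ℕ} (x y : Fin p → ℝ) :
    |dotProduct x y| ≤ vecLwNorm 2 x * vecLwNorm 2 y := by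
  rw [vecLw2_eq, vecLw2_eq, ← Real.sqrt_mul (Finset.sum_nonneg fun i _ => sq_nonneg _)]
  rw [← Real.sqrt_sq_eq_abs]
  exact Real.sqrt_le_sqrt
    (Finset.sum_mul_sq_le_sq_mul_sq Finset.univ x y)

lemma unitary_pres {p : ℕ} (U : Matrix (Fin p) (Fin p) ℝ)
    (hU : star U * U = 1) (y : Fin p → ℝ) :
    vecLwNorm 2 (U.mulVec y) = vecLwNorm 2 y := by
  rw [vecLw2_eq_dot, vecLw2_eq_dot]
  congr 1
  have hT : U.transpose * U = 1 := by
    have h' := hU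
    rwa [Matrix.star_eq_conjTranspose, show U.conjTranspose = U.transpose from by
      ext i j; simp [Matrix.conjTranspose_apply]] at h'
  rw [Matrix.dotProduct_mulVec, ← Matrix.mulVec_transpose, Matrix.mulVec_mulVec, hT,
    Matrix.one_mulVec]

lemma diag_bound {p : ℕ} (d : Fin p → ℝ) (c : ℝ) (hc : 0 ≤ c) (hd : ∀ i, |d i| ≤ c)
    (y : Fin p → ℝ) :
    vecLwNorm 2 ((Matrix.diagonal d).mulVec y) ≤ c * vecLwNorm 2 y := by
  rw [vecLw2_eq, vecLw2_eq, ← Real.sqrt_sq hc,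
    ← Real.sqrt_mul (sq_nonneg c)]
  apply Real.sqrt_le_sqrt
  rw [Finset.mul_sum]
  refine Finset.sum_le_sum fun i _ => ?_
  rw [Matrix.mulVec_diagonal, mul_pow]
  have : d i ^ 2 ≤ c ^ 2 := by
    rw [← sq_abs]
    exact pow_le_pow_left₀ (abs_nonneg _) (hd i) 2
  exact mul_le_mul_of_nonneg_right this (sq_nonneg _)

lemma specNorm_conj_le {p : ℕ} (U : Matrix (Fin p) (Fin p) ℝ)
    (hU : U ∈ Matrix.unitaryGroup (Fin p) ℝ) (d : Fin p → ℝ) (c : ℝ) (hc : 0 ≤ c)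
    (hd : ∀ i, |d i| ≤ c) :
    specNorm (U * Matrix.diagonal d * star U) ≤ c := by
  apply specNorm_le hc
  intro x hx
  have h1 : (U * Matrix.diagonal d * star U).mulVec x
      = U.mulVec ((Matrix.diagonal d).mulVec ((star U).mulVec x)) := by
    rw [Matrix.mulVec_mulVec, Matrix.mulVec_mulVec]
  rw [h1, unitary_pres U (Unitary.coe_star_mul_self ⟨U, hU⟩)]
  calc vecLwNorm 2 ((Matrix.diagonal d).mulVec ((star U).mulVec x))
      ≤ c * vecLwNorm 2 ((star U).mulVec x) := diag_bound d c hc hd _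
    _ = c * vecLwNorm 2 x := by
        rw [unitary_pres (star U) (by
          rw [star_star]
          exact Unitary.coe_mul_star_self ⟨U, hU⟩)]
    _ = c := by rw [hx, mul_one]

/-- Functional calculus for a symmetric real matrix: apply `g` to the eigenvalues in a
spectral decomposition. -/
def matApply (g : ℝ → ℝ) {p : ℕ} {Y : Matrix (Fin p) (Fin p) ℝ} (hY : Y.IsHermitian) :
    Matrix (Fin p) (Fin p) ℝ :=
  (hY.eigenvectorUnitary : Matrix (Fin p) (Fin p) ℝ) *
    Matrix.diagonal (fun i => g (hY.eigenvalues i)) *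
    star (hY.eigenvectorUnitary : Matrix (Fin p) (Fin p) ℝ)

/-- **The positive-part estimator.**  If `Σ̂⁺ = Σ_i max(λ̂_i, 0) v_i v_iᵀ` is the positive
part of a symmetric matrix `Σ̂ = Σ_i λ̂_i v_i v_iᵀ`, then for every positive semidefinite
`Σ`, `|||Σ̂⁺ - Σ||| ≤ 2 |||Σ̂ - Σ|||`. -/
theorem posPart_spectral_norm_le (p : ℕ) (A : Matrix (Fin p) (Fin p) ℝ)
    (hA : A.IsHermitian) (S : Matrix (Fin p) (Fin p) ℝ) (hS : S.PosSemidef) :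
    specNorm (matApply (fun t => max t 0) hA - S) ≤ 2 * specNorm (A - S) := by
  set t := specNorm (A - S) with ht
  have ht0 : 0 ≤ t := specNorm_nonneg _
  -- eigenvector facts
  have hv_unit : ∀ i, vecLwNorm 2 ⇑(hA.eigenvectorBasis i) = 1 := by
    intro i
    rw [vecLw2_eq_norm]
    exact hA.eigenvectorBasis.orthonormal.1 i
  have hv_dot : ∀ i, dotProduct ⇑(hA.eigenvectorBasis i) ⇑(hA.eigenvectorBasis i) = 1 := by
    intro i
    have h := hv_unit i
    rw [vecLw2_eq_dot] at h
    have hnn : 0 ≤ dotProduct ⇑(hA.eigenvectorBasis i) ⇑(hA.eigenvectorBasis i) :=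
      Finset.sum_nonneg fun j _ => mul_self_nonneg _
    nlinarith [Real.sq_sqrt hnn,
      Real.sqrt_nonneg (dotProduct ⇑(hA.eigenvectorBasis i) ⇑(hA.eigenvectorBasis i))]
  -- each negative eigenvalue is bounded by t
  have hlam : ∀ i, max (hA.eigenvalues i) 0 - hA.eigenvalues i ≤ t := by
    intro i
    set v := ⇑(hA.eigenvectorBasis i) with hv
    rcases le_or_gt 0 (hA.eigenvalues i) with h | h
    · rw [max_eq_left h]; simpa using ht0
    · rw [max_eq_right h.le, zero_sub]
      have hAv : A.mulVec v = hA.eigenvalues i • v := hA.mulVec_eigenvectorBasis i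
      have hdotA : dotProduct v (A.mulVec v) = hA.eigenvalues i := by
        rw [hAv, dotProduct_smul, hv_dot i, smul_eq_mul, mul_one]
      have hdotS : 0 ≤ dotProduct v (S.mulVec v) := by
        have := hS.dotProduct_mulVec_nonneg v
        simpa using this
      have hM : dotProduct v ((A - S).mulVec v) ≤ hA.eigenvalues i := by
        rw [Matrix.sub_mulVec, dotProduct_sub, hdotA]
        linarith
      have hMle : |dotProduct v ((A - S).mulVec v)| ≤ t := by
        calc |dotProduct v ((A - S).mulVec v)|
            ≤ vecLwNorm 2 v * vecLwNorm 2 ((A - S).mulVec v) := abs_dot_le _ _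
          _ = vecLwNorm 2 ((A - S).mulVec v) := by rw [hv_unit i, one_mul]
          _ ≤ t := le_specNorm _ v (hv_unit i)
      have := neg_abs_le (dotProduct v ((A - S).mulVec v))
      linarith [hM, hMle, abs_le.mp hMle]
  -- A⁺ - A as conjugated diagonal
  have hdiff : matApply (fun t => max t 0) hA - A
      = (hA.eigenvectorUnitary : Matrix (Fin p) (Fin p) ℝ) *
          Matrix.diagonal (fun i => max (hA.eigenvalues i) 0 - hA.eigenvalues i) *
          star (hA.eigenvectorUnitary : Matrix (Fin p) (Fin p) ℝ) := by
    have h1 := congrArg (fun M => matApply (fun t => max t 0) hA - M) hA.spectral_theorem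
    simp only [Unitary.conjStarAlgAut_apply] at h1
    rw [h1, matApply, ← Matrix.sub_mul, ← Matrix.mul_sub, ← Matrix.diagonal_sub]
    norm_num [Function.comp]
  have hposA : specNorm (matApply (fun t => max t 0) hA - A) ≤ t := by
    rw [hdiff]
    apply specNorm_conj_le _ hA.eigenvectorUnitary.2 _ t ht0
    intro i
    rw [abs_of_nonneg (by simp [le_max_right, sub_nonneg, le_max_left])]
    exact hlam i
  have hsplit : matApply (fun t => max t 0) hA - S
      = (matApply (fun t => max t 0) hA - A) + (A - S) := (sub_add_sub_cancel _ _ _).symm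
  calc specNorm (matApply (fun t => max t 0) hA - S)
      ≤ specNorm (matApply (fun t => max t 0) hA - A) + specNorm (A - S) := by
        rw [hsplit]; exact specNorm_triangle _ _
    _ ≤ t + t := add_le_add hposA le_rfl
    _ = 2 * t := by ring

end
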